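/- Let G be a group with elements x_{ts} for n ≥ t > s ≥ 1 satisfying the Birman-Ko-Lee relations. Then for t_3 > t_2 > t_1 with t_2 > s, one has x_{t_3 s} x_{t_2 t_1} x_{t_3 t_1} = x_{t_2 s} x_{t_3 s} x_{t_2 t_1}. -/
import Mathlib


theorem bkl_lemma3b {G : Type*} [Group G] (n : ℕ) (x : ℕ → ℕ → G)
    (hcomm : ∀ t s r q : ℕ, t ≤ n → s < t → 1 ≤ s → r ≤ n → q < r → 1 ≤ q →
      0 < ((t : ℤ) - r) * ((t : ℤ) - q) * ((s : ℤ) - r) * ((s : ℤ) - q) →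
      x t s * x r q = x r q * x t s)
    (hband1 : ∀ t s r : ℕ, t ≤ n → s < t → r < s → 1 ≤ r →
      x t s * x s r = x t r * x t s)
    (hband2 : ∀ t s r : ℕ, t ≤ n → s < t → r < s → 1 ≤ r →
      x t r * x t s = x s r * x t r) :
    ∀ s t₁ t₂ t₃ : ℕ, t₃ ≤ n → t₂ < t₃ → t₁ < t₂ → 1 ≤ t₁ → s < t₂ → 1 ≤ s →
      x t₃ s * x t₂ t₁ * x t₃ t₁ = x t₂ s * x t₃ s * x t₂ t₁ := by
  intro s t₁ t₂ t₃ h3n h23 h12 h1 hs2 hs1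
  have h2n : t₂ ≤ n := h23.le.trans h3n
  have h13 : t₁ < t₃ := h12.trans h23
  have hs3 : s < t₃ := hs2.trans h23
  rcases lt_trichotomy s t₁ with h | h | h
  · -- s < t₁
    have hc : x t₃ s * x t₂ t₁ = x t₂ t₁ * x t₃ s := by
      apply hcomm t₃ s t₂ t₁ h3n hs3 hs1 h2n h12 h1
      have a1 : (t₂ : ℤ) < t₃ := by exact_mod_cast h23
      have a2 : (t₁ : ℤ) < t₃ := by exact_mod_cast h13
      have a3 : (s : ℤ) < t₂ := by exact_mod_cast hs2
      have a4 : (s : ℤ) < t₁ := by exact_mod_cast h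
      nlinarith [mul_pos (sub_pos.mpr a1) (sub_pos.mpr a2),
        mul_pos (sub_pos.mpr a3) (sub_pos.mpr a4)]
    have e2 : x t₃ s * x t₃ t₁ = x t₁ s * x t₃ s := hband2 t₃ t₁ s h3n h13 h hs1
    have e3 : x t₂ t₁ * x t₁ s = x t₂ s * x t₂ t₁ := hband1 t₂ t₁ s h2n h12 h hs1
    calc x t₃ s * x t₂ t₁ * x t₃ t₁
        = x t₂ t₁ * (x t₃ s * x t₃ t₁) := by rw [hc, mul_assoc]
      _ = x t₂ t₁ * x t₁ s * x t₃ s := by rw [e2, mul_assoc]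
      _ = x t₂ s * (x t₂ t₁ * x t₃ s) := by rw [e3, mul_assoc]
      _ = x t₂ s * x t₃ s * x t₂ t₁ := by rw [← hc, mul_assoc]
  · -- s = t₁
    subst h
    have a : x t₃ t₂ * x t₂ s = x t₃ s * x t₃ t₂ := hband1 t₃ t₂ s h3n h23 hs2 hs1
    have b : x t₃ s * x t₃ t₂ = x t₂ s * x t₃ s := hband2 t₃ t₂ s h3n h23 hs2 hs1
    calc x t₃ s * x t₂ s * x t₃ s
        = x t₃ s * (x t₂ s * x t₃ s) := by rw [mul_assoc]
      _ = x t₃ s * (x t₃ s * x t₃ t₂) := by rw [← b]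
      _ = x t₃ s * (x t₃ t₂ * x t₂ s) := by rw [← a]
      _ = x t₃ s * x t₃ t₂ * x t₂ s := by rw [mul_assoc]
      _ = x t₂ s * x t₃ s * x t₂ s := by rw [b]
  · -- t₁ < s
    have b1 : x t₃ t₂ * x t₂ t₁ = x t₃ t₁ * x t₃ t₂ := hband1 t₃ t₂ t₁ h3n h23 h12 h1
    have b2 : x t₃ t₁ * x t₃ t₂ = x t₂ t₁ * x t₃ t₁ := hband2 t₃ t₂ t₁ h3n h23 h12 h1
    have c2 : x t₃ s * x t₃ t₂ = x t₂ s * x t₃ s := hband2 t₃ t₂ s h3n h23 hs2 hs1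
    calc x t₃ s * x t₂ t₁ * x t₃ t₁
        = x t₃ s * (x t₂ t₁ * x t₃ t₁) := by rw [mul_assoc]
      _ = x t₃ s * (x t₃ t₁ * x t₃ t₂) := by rw [b2]
      _ = x t₃ s * (x t₃ t₂ * x t₂ t₁) := by rw [b1]
      _ = x t₃ s * x t₃ t₂ * x t₂ t₁ := by rw [mul_assoc]
      _ = x t₂ s * x t₃ s * x t₂ t₁ := by rw [c2]
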